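/- For every real R with 0 ≤ R < 1: ∫₀^R √((1 − r²)/(1 + r²)³) dr = Σ_{k=0}^{∞} Σ_{l=0}^{∞} (−1)^l · ((1/2)_{k+l} · (−1/2)_k · (3/2)_l)/((3/2)_{k+l} · k! · l!) · R^{2(k+l)+1}, where (a)_n = Γ(a+n)/Γ(a) denotes the Pochhammer symbol. -/

import Mathlib

/-- The Pochhammer symbol `(a)ₙ = Γ(a + n)/Γ(a)` for real `a`. -/
noncomputable def pochhammerReal (a : ℝ) (n : ℕ) : ℝ :=
  Real.Gamma (a + n) / Real.Gamma a


open Filter Finset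
open scoped Topology

namespace TT
noncomputable def P (a : ℝ) (n : ℕ) : ℝ := ∏ i ∈ Finset.range n, (a + i)
lemma P_zero (a : ℝ) : P a 0 = 1 := by simp [P]
lemma P_succ (a : ℝ) (n : ℕ) : P a (n + 1) = P a n * (a + n) := Finset.prod_range_succ _ _
lemma P_ne_zero {a : ℝ} (h : ∀ i : ℕ, a + i ≠ 0) (n : ℕ) : P a n ≠ 0 :=
  Finset.prod_ne_zero_iff.2 fun i _ => h i
noncomputable def c (a : ℝ) (k : ℕ) : ℝ := P a k / (Nat.factorial k)
lemma c_zero (a : ℝ) : c a 0 = 1 := by simp [c, P_zero]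
lemma c_ne_zero {a : ℝ} (h : ∀ i : ℕ, a + i ≠ 0) (k : ℕ) : c a k ≠ 0 :=
  div_ne_zero (P_ne_zero h k) (by exact_mod_cast (Nat.factorial_pos k).ne')
lemma c_succ (a : ℝ) (k : ℕ) : c a (k + 1) = c a k * ((a + k) / (k + 1)) := by
  rw [c, c, P_succ, Nat.factorial_succ, div_mul_div_comm]
  push_cast
  rw [mul_comm ((k:ℝ)+1)]
lemma succ_mul_c_succ (a : ℝ) (k : ℕ) : ((k : ℝ) + 1) * c a (k + 1) = c a k * (a + k) := by
  have hk1 : ((k : ℝ) + 1) ≠ 0 := by positivity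
  rw [c_succ]; field_simp


lemma gamma_ne_zero {a : ℝ} (h : ∀ i : ℕ, a + i ≠ 0) : Real.Gamma a ≠ 0 := by
  refine Real.Gamma_ne_zero fun m hm => h m ?_
  rw [hm]; ring

lemma poch_eq_P {a : ℝ} (h : ∀ i : ℕ, a + i ≠ 0) (n : ℕ) : pochhammerReal a n = P a n := by
  induction n with
  | zero => simp [pochhammerReal, P_zero, div_self (gamma_ne_zero h)]
  | succ n ih =>
      have hc : a + ((n : ℝ) + 1) = (a + n) + 1 := by ring
      rw [pochhammerReal, Nat.cast_succ, hc, Real.Gamma_add_one (h n), P_succ, ← ih,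
        pochhammerReal]
      ring

lemma tendsto_abs_aux (a : ℝ) :
    Tendsto (fun k : ℕ => |(a + k) / ((k : ℝ) + 1)|) atTop (𝓝 1) := by
  have h0 : Tendsto (fun k : ℕ => (a - 1) * (1 / ((k : ℝ) + 1))) atTop (𝓝 0) := by
    simpa using (tendsto_one_div_add_atTop_nhds_zero_nat).const_mul (a - 1)
  have h1 : Tendsto (fun k : ℕ => (a + k) / ((k : ℝ) + 1)) atTop (𝓝 1) := by
    have := (tendsto_const_nhds : Tendsto (fun _ : ℕ => (1:ℝ)) atTop (𝓝 1)).add h0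
    rw [add_zero] at this
    refine this.congr fun k => ?_
    have hk : ((k : ℝ) + 1) ≠ 0 := by positivity
    field_simp
    ring
  have := (continuous_abs.tendsto (1 : ℝ)).comp h1
  simpa [Function.comp_def] using this

lemma summable_qpow {q : ℕ → ℝ} (hq : ∀ k, q k ≠ 0)
    (hr : Tendsto (fun k => |q (k + 1)| / |q k|) atTop (𝓝 1)) {x : ℝ} (hx : |x| < 1) :
    Summable fun k => q k * x ^ k := by
  rcases eq_or_ne x 0 with h0 | h0
  · subst h0
    refine summable_of_ne_finset_zero (s := {0}) fun k hk => ?_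
    simp only [Finset.mem_singleton] at hk
    rw [zero_pow hk, mul_zero]
  · have hxs : ‖x‖ < 1 := by rwa [Real.norm_eq_abs]
    refine summable_of_ratio_test_tendsto_lt_one hxs
      (Eventually.of_forall fun k => mul_ne_zero (hq k) (pow_ne_zero _ h0)) ?_
    have key : (fun k => ‖q (k + 1) * x ^ (k + 1)‖ / ‖q k * x ^ k‖)
        = fun k => (|q (k + 1)| / |q k|) * |x| := by
      funext k
      have hqk : |q k| ≠ 0 := abs_ne_zero.2 (hq k)
      have hxk : |x| ^ k ≠ 0 := pow_ne_zero _ (abs_ne_zero.2 h0)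
      rw [Real.norm_eq_abs, Real.norm_eq_abs, abs_mul, abs_mul, abs_pow, abs_pow, pow_succ]
      field_simp
    rw [key]
    simpa using hr.mul_const |x|

lemma abs_ratio_eq {q : ℕ → ℝ} {s : ℕ → ℝ} (hq : ∀ k, q k ≠ 0)
    (hs : ∀ k, q (k + 1) = q k * s k) (k : ℕ) : |q (k + 1)| / |q k| = |s k| := by
  rw [hs, abs_mul, mul_comm, mul_div_assoc, div_self (abs_ne_zero.2 (hq k)), mul_one]

lemma summable_c {a : ℝ} (h : ∀ i : ℕ, a + i ≠ 0) {x : ℝ} (hx : |x| < 1) :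
    Summable fun k => c a k * x ^ k := by
  refine summable_qpow (c_ne_zero h) ?_ hx
  have := tendsto_abs_aux a
  refine this.congr' (Eventually.of_forall fun k => ?_) |>.congr fun k => rfl
  exact (abs_ratio_eq (c_ne_zero h) (fun k => c_succ a k) k).symm

lemma summable_d {a : ℝ} (h : ∀ i : ℕ, a + i ≠ 0) {x : ℝ} (hx : |x| < 1) :
    Summable fun k => (c a k * (a + k)) * x ^ k := by
  have hd : ∀ k, c a k * (a + (k:ℝ)) ≠ 0 := fun k => mul_ne_zero (c_ne_zero h k) (h k)
  refine summable_qpow hd ?_ hx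
  have := tendsto_abs_aux (a + 1)
  have heq : ∀ k : ℕ, c a (k + 1) * (a + ((k:ℝ) + 1)) = (c a k * (a + k)) * ((a + 1 + k) / ((k:ℝ) + 1)) := by
    intro k
    rw [c_succ]
    have hk1 : ((k : ℝ) + 1) ≠ 0 := by positivity
    rw [div_eq_mul_inv, div_eq_mul_inv]
    ring
  have heq' : ∀ k : ℕ, c a (k + 1) * (a + ((k + 1 : ℕ) : ℝ)) = (c a k * (a + k)) * ((a + 1 + k) / ((k:ℝ) + 1)) := by
    intro k
    rw [← heq k]
    push_cast
    ring_nf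
  refine this.congr fun k => ?_
  exact (abs_ratio_eq hd (fun k => heq' k) k).symm


theorem binom {a : ℝ} (h : ∀ i : ℕ, a + i ≠ 0) {x : ℝ} (hx : |x| < 1) :
    HasSum (fun k => c a k * x ^ k) ((1 - x) ^ (-a) : ℝ) := by
  set ρ : ℝ := (|x| + 1) / 2 with hρ
  have hxabs : 0 ≤ |x| := abs_nonneg x
  have hρ0 : 0 < ρ := by rw [hρ]; linarith
  have hρ1 : ρ < 1 := by rw [hρ]; linarith
  have hxρ : |x| < ρ := by rw [hρ]; linarith
  set t : Set ℝ := Set.Ioo (-ρ) ρ with ht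
  have h0t : (0 : ℝ) ∈ t := by constructor <;> simp [hρ0] <;> linarith
  have hxt : x ∈ t := by
    constructor
    · have := neg_abs_le x; linarith
    · have := le_abs_self x; linarith
  have hmemlt : ∀ y ∈ t, |y| < 1 := by
    intro y hy
    rw [abs_lt]
    exact ⟨by linarith [hy.1], by linarith [hy.2]⟩
  -- the uniform bound for the derivative series
  set u : ℕ → ℝ := fun k => |c a k| * k * ρ ^ (k - 1) with hu_def
  have hu : Summable u := by
    have h1 : Summable fun k => (c a k * (a + k)) * ρ ^ k :=
      summable_d h (by rwa [abs_of_pos hρ0])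
    have h2 : Summable fun k => |(c a k * (a + k)) * ρ ^ k| := h1.abs
    refine (summable_nat_add_iff 1).mp (h2.congr fun k => ?_)
    show |(c a k * (a + k)) * ρ ^ k| = u (k + 1)
    rw [hu_def]
    have : |c a (k + 1)| * ((k : ℝ) + 1) = |c a k * (a + k)| := by
      rw [← abs_of_pos (show (0:ℝ) < (k:ℝ) + 1 by positivity), ← abs_mul, mul_comm,
        succ_mul_c_succ]
    simp only [Nat.cast_succ, Nat.add_sub_cancel]
    rw [abs_mul, abs_pow, abs_of_pos hρ0, ← this]
    try ring
  -- termwise derivatives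
  have hg : ∀ (k : ℕ) (y : ℝ), y ∈ t → HasDerivAt (fun z => c a k * z ^ k)
      (c a k * (k * y ^ (k - 1))) y := fun k y _ => (hasDerivAt_pow k y).const_mul _
  have hg' : ∀ (k : ℕ) (y : ℝ), y ∈ t → ‖c a k * (k * y ^ (k - 1))‖ ≤ u k := by
    intro k y hy
    rw [Real.norm_eq_abs, abs_mul, abs_mul, Nat.abs_cast, abs_pow, hu_def]
    have hyρ : |y| ≤ ρ := by
      rw [abs_le]; exact ⟨(hy.1).le, (hy.2).le⟩
    have := pow_le_pow_left₀ (abs_nonneg y) hyρ (k - 1)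
    have hck : 0 ≤ |c a k| * k := by positivity
    calc |c a k| * ((k : ℝ) * |y| ^ (k - 1)) = |c a k| * k * |y| ^ (k - 1) := by ring
      _ ≤ |c a k| * k * ρ ^ (k - 1) := by
          exact mul_le_mul_of_nonneg_left this hck
  have hg0 : Summable fun k => c a k * (0 : ℝ) ^ k := summable_c h (by norm_num)
  -- the sum function and its derivative
  set S : ℝ → ℝ := fun y => ∑' k, c a k * y ^ k with hS
  have hSderiv : ∀ y ∈ t, HasDerivAt S (∑' k, c a k * ((k : ℝ) * y ^ (k - 1))) y := by
    intro y hy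
    exact hasDerivAt_tsum_of_isPreconnected hu isOpen_Ioo (convex_Ioo _ _).isPreconnected
      hg hg' h0t hg0 hy
  -- identify the derivative sum
  have key : ∀ y ∈ t, (1 - y) * (∑' k, c a k * ((k : ℝ) * y ^ (k - 1))) = a * S y := by
    intro y hy
    have hy1 : |y| < 1 := hmemlt y hy
    have Sg' : Summable fun k => c a k * ((k : ℝ) * y ^ (k - 1)) :=
      Summable.of_norm_bounded hu fun k => hg' k y hy
    have hd : Summable fun k => (c a k * (a + k)) * y ^ k := summable_d h hy1
    have E1 : (∑' k, c a k * ((k : ℝ) * y ^ (k - 1))) = ∑' k, (c a k * (a + k)) * y ^ k := by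
      rw [Summable.tsum_eq_zero_add Sg']
      simp only [Nat.cast_zero, zero_mul, mul_zero, zero_add]
      refine tsum_congr fun k => ?_
      have : c a (k + 1) * (((k : ℕ) + 1 : ℝ) * y ^ k) = (((k : ℝ) + 1) * c a (k + 1)) * y ^ k := by
        ring
      simp only [Nat.cast_succ, Nat.add_sub_cancel]
      rw [this, succ_mul_c_succ]
    set G : ℕ → ℝ := fun k => ((k : ℝ) * c a k) * y ^ k with hG
    have hGsucc : ∀ k : ℕ, G (k + 1) = y * ((c a k * (a + k)) * y ^ k) := by
      intro k
      rw [hG]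
      simp only [Nat.cast_succ]
      rw [succ_mul_c_succ]
      ring
    have hGsum : Summable G := by
      refine (summable_nat_add_iff 1).mp ?_
      refine ((hd.mul_left y).congr fun k => ?_)
      exact (hGsucc k).symm
    have E2 : y * (∑' k, (c a k * (a + k)) * y ^ k) = ∑' k, G k := by
      rw [Summable.tsum_eq_zero_add hGsum]
      have : G 0 = 0 := by simp [hG]
      rw [this, zero_add, ← tsum_mul_left]
      exact tsum_congr fun k => (hGsucc k).symm
    rw [E1, sub_mul, one_mul, E2, ← Summable.tsum_sub hd hGsum]
    rw [hS]
    rw [← tsum_mul_left]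
    refine tsum_congr fun k => ?_
    rw [hG]
    ring
  -- the quotient function is constant
  set F : ℝ → ℝ := fun y => S y * (1 - y) ^ a with hF
  have hFderiv : ∀ y ∈ t, HasDerivAt F 0 y := by
    intro y hy
    have h1y : (0 : ℝ) < 1 - y := by linarith [hy.2]
    have hin : HasDerivAt (fun z : ℝ => 1 - z) (-1) y := by
      simpa using (hasDerivAt_id y).const_sub 1
    have hrp : HasDerivAt (fun z : ℝ => (1 - z) ^ a) (a * (1 - y) ^ (a - 1) * (-1)) y :=
      (Real.hasDerivAt_rpow_const (Or.inl h1y.ne')).comp y hin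
    have := (hSderiv y hy).mul hrp
    refine this.congr_deriv ?_
    have hpow : (1 - y) ^ a = (1 - y) ^ (a - 1) * (1 - y) := by
      rw [← Real.rpow_add_one h1y.ne' (a - 1), sub_add_cancel]
    have hk := key y hy
    rw [hpow]
    linear_combination ((1 - y) ^ (a - 1)) * hk
  have hF0 : F 0 = 1 := by
    rw [hF]
    have hS0 : S 0 = 1 := by
      have hS0' : S 0 = ∑' k, c a k * (0:ℝ) ^ k := rfl
      rw [hS0', tsum_eq_single 0 (fun k hk => by rw [zero_pow hk, mul_zero])]
      simp [c_zero]
    simp [hS0, Real.one_rpow]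
  have hconst : F x = 1 := by
    rcases eq_or_ne x 0 with h0 | h0
    · rw [h0]; exact hF0
    set m := min 0 x with hm
    set M := max 0 x with hM
    have hsub : Set.Icc m M ⊆ t := by
      intro y hy
      constructor
      · have : -ρ < m := by
          rw [hm]
          rcases le_total 0 x with hc | hc
          · simp [min_eq_left hc]; linarith
          · rw [min_eq_right hc]
            have := neg_abs_le x; linarith
        linarith [hy.1]
      · have : M < ρ := by
          rw [hM]
          rcases le_total 0 x with hc | hc
          · rw [max_eq_right hc]
            have := le_abs_self x; linarith
          · simp [max_eq_left hc]; linarith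
        linarith [hy.2]
    have hcont : ContinuousOn F (Set.Icc m M) := fun y hy =>
      ((hFderiv y (hsub hy)).continuousAt).continuousWithinAt
    have hderiv : ∀ y ∈ Set.Ico m M, HasDerivWithinAt F 0 (Set.Ici y) y := fun y hy =>
      (hFderiv y (hsub ⟨hy.1, hy.2.le⟩)).hasDerivWithinAt
    have hcc := constant_of_has_deriv_right_zero hcont hderiv
    have hx' : x ∈ Set.Icc m M := ⟨min_le_right 0 x, le_max_right 0 x⟩
    have h0' : (0:ℝ) ∈ Set.Icc m M := ⟨min_le_left 0 x, le_max_left 0 x⟩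
    rw [← hF0]
    rw [hcc x hx', hcc 0 h0']
  -- conclude
  have h1x : (0 : ℝ) < 1 - x := by
    have := le_abs_self x; linarith
  have hSx : S x = (1 - x) ^ (-a) := by
    have hne : (1 - x) ^ a ≠ 0 := (Real.rpow_pos_of_pos h1x a).ne'
    rw [Real.rpow_neg h1x.le]
    simp only [hF] at hconst
    field_simp at hconst ⊢
    linarith [hconst]
  rw [← hSx]
  exact (summable_c h hx).hasSum

lemma hyp_neghalf : ∀ i : ℕ, -(1/2 : ℝ) + i ≠ 0 := by
  intro i
  cases i with
  | zero => norm_num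
  | succ n =>
      have hn : (0:ℝ) ≤ n := Nat.cast_nonneg n
      push_cast
      intro hc
      linarith
lemma hyp_threehalf : ∀ i : ℕ, (3/2 : ℝ) + i ≠ 0 := by
  intro i
  have hn : (0:ℝ) ≤ i := Nat.cast_nonneg i
  intro hc
  linarith
lemma hyp_half : ∀ i : ℕ, (1/2 : ℝ) + i ≠ 0 := by
  intro i
  have hn : (0:ℝ) ≤ i := Nat.cast_nonneg i
  intro hc
  linarith

lemma P_three_halves (n : ℕ) : P (3/2 : ℝ) n = (2 * n + 1) * P (1/2 : ℝ) n := by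
  induction n with
  | zero => simp [P_zero]
  | succ n ih =>
      rw [P_succ, P_succ, ih]
      push_cast
      ring

/-- the coefficient of the double series -/
noncomputable def coefT (p : ℕ × ℕ) : ℝ := c (-(1/2)) p.1 * c (3/2) p.2 * (-1) ^ p.2

lemma term_eq (p : ℕ × ℕ) (r : ℝ) :
    (c (-(1/2)) p.1 * (r ^ 2) ^ p.1) * (c (3/2) p.2 * (-(r ^ 2)) ^ p.2)
      = coefT p * r ^ (2 * (p.1 + p.2)) := by
  have h2 : r ^ (2 * (p.1 + p.2)) = (r ^ 2) ^ p.1 * (r ^ 2) ^ p.2 := by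
    rw [pow_mul, pow_add]
  rw [coefT, neg_pow, h2]
  ring

lemma summable_abs_c {a : ℝ} (h : ∀ i : ℕ, a + i ≠ 0) {x : ℝ} (hx : |x| < 1) :
    Summable fun k => ‖c a k * x ^ k‖ := by
  refine (summable_c h hx).abs.congr fun k => ?_
  rw [Real.norm_eq_abs]

lemma integrand_hasSum {r : ℝ} (h1 : r ^ 2 < 1) :
    HasSum (fun p : ℕ × ℕ => coefT p * r ^ (2 * (p.1 + p.2)))
      (Real.sqrt ((1 - r ^ 2) / (1 + r ^ 2) ^ 3)) := by
  have hr2 : |r ^ 2| < 1 := by rw [abs_of_nonneg (by positivity)]; exact h1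
  have hr2' : |(-(r ^ 2))| < 1 := by rwa [abs_neg]
  have h1sum := binom hyp_neghalf hr2
  have h2sum := binom hyp_threehalf hr2'
  have hs1 : Summable fun k => ‖c (-(1/2)) k * (r ^ 2) ^ k‖ := summable_abs_c hyp_neghalf hr2
  have hs2 : Summable fun l => ‖c (3/2) l * (-(r ^ 2)) ^ l‖ := summable_abs_c hyp_threehalf hr2'
  have hprodsum : Summable fun p : ℕ × ℕ =>
      (c (-(1/2)) p.1 * (r ^ 2) ^ p.1) * (c (3/2) p.2 * (-(r ^ 2)) ^ p.2) :=
    (Summable.mul_norm hs1 hs2).of_norm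
  have hprod := h1sum.mul h2sum hprodsum
  have hval : (1 - r ^ 2) ^ (-(-(1/2)) : ℝ) * (1 - -(r ^ 2)) ^ (-(3/2) : ℝ)
      = Real.sqrt ((1 - r ^ 2) / (1 + r ^ 2) ^ 3) := by
    have ha : (0:ℝ) ≤ 1 - r ^ 2 := by linarith
    have hb : (0:ℝ) < 1 + r ^ 2 := by positivity
    have e1 : (- -(1/2) : ℝ) = 1/2 := by norm_num
    have e2 : (1 : ℝ) - -(r ^ 2) = 1 + r ^ 2 := by ring
    rw [e1, e2, Real.rpow_neg hb.le, ← div_eq_mul_inv,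
        Real.sqrt_div ha, Real.sqrt_eq_rpow, Real.sqrt_eq_rpow,
        ← Real.rpow_natCast (1 + r ^ 2) 3, ← Real.rpow_mul hb.le]
    norm_num
  rw [hval] at hprod
  have hfe : (fun p : ℕ × ℕ => (c (-(1/2)) p.1 * (r ^ 2) ^ p.1) * (c (3/2) p.2 * (-(r ^ 2)) ^ p.2))
      = fun p : ℕ × ℕ => coefT p * r ^ (2 * (p.1 + p.2)) := funext fun p => term_eq p r
  rwa [hfe] at hprod

lemma summable_absc {a : ℝ} (h : ∀ i : ℕ, a + i ≠ 0) {x : ℝ} (hx0 : 0 ≤ x) (hx1 : x < 1) :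
    Summable fun k => |c a k| * x ^ k := by
  refine (summable_c h (by rwa [abs_of_nonneg hx0])).abs.congr fun k => ?_
  rw [abs_mul, abs_pow, abs_of_nonneg hx0]

end TT


open TT MeasureTheory

set_option maxHeartbeats 1000000 in
/-- The travel-time integral `∫₀ᴿ √((1 − r²)/(1 + r²)³) dr` equals the double power
series of the Appell hypergeometric function `R·F₁(1/2; −1/2, 3/2; 3/2; R², −R²)`. -/
theorem travel_time_integral_appell_series (R : ℝ) (hR0 : 0 ≤ R) (hR1 : R < 1) :
    ∫ r in (0 : ℝ)..R, Real.sqrt ((1 - r ^ 2) / (1 + r ^ 2) ^ 3) =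
      ∑' k : ℕ, ∑' l : ℕ, (-1 : ℝ) ^ l *
        (pochhammerReal (1 / 2) (k + l) * pochhammerReal (-(1 / 2)) k *
            pochhammerReal (3 / 2) l) /
          (pochhammerReal (3 / 2) (k + l) * (Nat.factorial k) * (Nat.factorial l)) *
        R ^ (2 * (k + l) + 1) := by
  have hR2 : R ^ 2 < 1 := by nlinarith
  have hRR : ∀ r ∈ Set.Ioc (0 : ℝ) R, r ^ 2 < 1 := by
    intro r hr
    nlinarith [hr.1, hr.2]
  -- the summable product bound
  have hf1 : Summable fun k => |c (-(1/2)) k| * R ^ (2 * k) := by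
    refine (summable_absc hyp_neghalf (by positivity) hR2).congr fun k => ?_
    rw [pow_mul]
  have hf2 : Summable fun l => |c (3/2) l| * R ^ (2 * l) := by
    refine (summable_absc hyp_threehalf (by positivity) hR2).congr fun l => ?_
    rw [pow_mul]
  have hbsum : Summable fun p : ℕ × ℕ =>
      (|c (-(1/2)) p.1| * R ^ (2 * p.1)) * (|c (3/2) p.2| * R ^ (2 * p.2)) * R := by
    refine Summable.mul_right R ?_
    exact hf1.mul_of_nonneg hf2 (fun k => by positivity) (fun l => by positivity)
  -- termwise norm bounds
  have habs_coef : ∀ p : ℕ × ℕ, |coefT p| = |c (-(1/2)) p.1| * |c (3/2) p.2| := by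
    intro p
    rw [coefT, abs_mul, abs_mul, abs_pow, abs_neg, abs_one, one_pow, mul_one]
  have hRsplit : ∀ p : ℕ × ℕ, R ^ (2 * (p.1 + p.2)) = R ^ (2 * p.1) * R ^ (2 * p.2) := by
    intro p
    rw [← pow_add]
    congr 1
    ring
  -- integrability
  have hIntg : ∀ p : ℕ × ℕ,
      IntegrableOn (fun r => coefT p * r ^ (2 * (p.1 + p.2))) (Set.Ioc (0:ℝ) R) volume :=
    fun p => (continuous_const.mul (continuous_pow _)).integrableOn_Ioc
  -- bound on integrals of norms
  have hbound : ∀ p : ℕ × ℕ,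
      (∫ r in Set.Ioc (0:ℝ) R, ‖coefT p * r ^ (2 * (p.1 + p.2))‖)
        ≤ (|c (-(1/2)) p.1| * R ^ (2 * p.1)) * (|c (3/2) p.2| * R ^ (2 * p.2)) * R := by
    intro p
    have hmono : ∀ r ∈ Set.Ioc (0:ℝ) R,
        ‖coefT p * r ^ (2 * (p.1 + p.2))‖ ≤ |coefT p| * R ^ (2 * (p.1 + p.2)) := by
      intro r hr
      rw [Real.norm_eq_abs, abs_mul, abs_pow]
      refine mul_le_mul_of_nonneg_left ?_ (abs_nonneg _)
      rw [abs_of_nonneg hr.1.le]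
      exact pow_le_pow_left₀ hr.1.le hr.2 _
    have hconst_int : IntegrableOn (fun _ : ℝ => |coefT p| * R ^ (2 * (p.1 + p.2)))
        (Set.Ioc (0:ℝ) R) volume :=
      integrableOn_const measure_Ioc_lt_top.ne
    calc (∫ r in Set.Ioc (0:ℝ) R, ‖coefT p * r ^ (2 * (p.1 + p.2))‖)
        ≤ ∫ _ in Set.Ioc (0:ℝ) R, |coefT p| * R ^ (2 * (p.1 + p.2)) :=
          setIntegral_mono_on ((hIntg p).norm) hconst_int measurableSet_Ioc hmono
      _ = (|coefT p| * R ^ (2 * (p.1 + p.2))) * R := by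
          rw [setIntegral_const, Real.volume_real_Ioc_of_le hR0, sub_zero,
            smul_eq_mul, mul_comm]
      _ = (|c (-(1/2)) p.1| * R ^ (2 * p.1)) * (|c (3/2) p.2| * R ^ (2 * p.2)) * R := by
          rw [habs_coef p, hRsplit p]
          ring
  have hsumnorm : Summable fun p : ℕ × ℕ =>
      ∫ r in Set.Ioc (0:ℝ) R, ‖coefT p * r ^ (2 * (p.1 + p.2))‖ := by
    refine Summable.of_nonneg_of_le (fun p => ?_) hbound hbsum
    exact integral_nonneg fun r => norm_nonneg _
  -- swap integral and sum
  have hswap := integral_tsum_of_summable_integral_norm hIntg hsumnorm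
  -- identify the pointwise sum with the integrand
  have hcongr : (∫ r in Set.Ioc (0:ℝ) R, ∑' p : ℕ × ℕ, coefT p * r ^ (2 * (p.1 + p.2)))
      = ∫ r in Set.Ioc (0:ℝ) R, Real.sqrt ((1 - r ^ 2) / (1 + r ^ 2) ^ 3) :=
    setIntegral_congr_fun measurableSet_Ioc fun r hr => (integrand_hasSum (hRR r hr)).tsum_eq
  -- compute each term integral
  have hInt : ∀ p : ℕ × ℕ, (∫ r in Set.Ioc (0:ℝ) R, coefT p * r ^ (2 * (p.1 + p.2)))
      = coefT p * (R ^ (2 * (p.1 + p.2) + 1) / ((2 * (p.1 + p.2) : ℕ) + 1 : ℝ)) := by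
    intro p
    rw [← intervalIntegral.integral_of_le hR0, intervalIntegral.integral_const_mul,
      integral_pow, zero_pow (by omega), sub_zero]
  -- the value function and its summability
  have hvalbound : ∀ p : ℕ × ℕ,
      ‖coefT p * (R ^ (2 * (p.1 + p.2) + 1) / ((2 * (p.1 + p.2) : ℕ) + 1 : ℝ))‖
        ≤ (|c (-(1/2)) p.1| * R ^ (2 * p.1)) * (|c (3/2) p.2| * R ^ (2 * p.2)) * R := by
    intro p
    have hd1 : (1:ℝ) ≤ ((2 * (p.1 + p.2) : ℕ) + 1 : ℝ) := by
      have : (0:ℝ) ≤ ((2 * (p.1 + p.2) : ℕ) : ℝ) := Nat.cast_nonneg _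
      linarith
    have hnum : (0:ℝ) ≤ R ^ (2 * (p.1 + p.2) + 1) := by positivity
    rw [Real.norm_eq_abs, abs_mul, abs_div, abs_of_nonneg hnum,
      abs_of_nonneg (by linarith : (0:ℝ) ≤ ((2 * (p.1 + p.2) : ℕ) + 1 : ℝ))]
    calc |coefT p| * (R ^ (2 * (p.1 + p.2) + 1) / ((2 * (p.1 + p.2) : ℕ) + 1 : ℝ))
        ≤ |coefT p| * R ^ (2 * (p.1 + p.2) + 1) := by
          refine mul_le_mul_of_nonneg_left ?_ (abs_nonneg _)
          exact div_le_self hnum hd1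
      _ = (|c (-(1/2)) p.1| * R ^ (2 * p.1)) * (|c (3/2) p.2| * R ^ (2 * p.2)) * R := by
          rw [habs_coef p, pow_succ, hRsplit p]
          ring
  have hvalsum : Summable fun p : ℕ × ℕ =>
      coefT p * (R ^ (2 * (p.1 + p.2) + 1) / ((2 * (p.1 + p.2) : ℕ) + 1 : ℝ)) :=
    Summable.of_norm_bounded hbsum hvalbound
  -- put everything together
  rw [intervalIntegral.integral_of_le hR0, ← hcongr, ← hswap]
  have hfun : (fun p : ℕ × ℕ => ∫ r in Set.Ioc (0:ℝ) R, coefT p * r ^ (2 * (p.1 + p.2)))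
      = fun p : ℕ × ℕ =>
        coefT p * (R ^ (2 * (p.1 + p.2) + 1) / ((2 * (p.1 + p.2) : ℕ) + 1 : ℝ)) :=
    funext hInt
  rw [hfun, Summable.tsum_prod' hvalsum fun k => hvalsum.prod_factor k]
  refine tsum_congr fun k => tsum_congr fun l => ?_
  -- termwise identification
  simp only [poch_eq_P hyp_half, poch_eq_P hyp_neghalf, poch_eq_P hyp_threehalf]
  rw [P_three_halves (k + l), coefT, c, c]
  have hP12 : P (1/2 : ℝ) (k + l) ≠ 0 := P_ne_zero hyp_half _
  have hkf : ((Nat.factorial k : ℝ)) ≠ 0 := by exact_mod_cast (Nat.factorial_pos k).ne'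
  have hlf : ((Nat.factorial l : ℝ)) ≠ 0 := by exact_mod_cast (Nat.factorial_pos l).ne'
  have hden : (2 * ((k + l : ℕ) : ℝ) + 1) ≠ 0 := by
    have : (0:ℝ) ≤ ((k + l : ℕ) : ℝ) := Nat.cast_nonneg _
    intro hc
    linarith
  have hcast : ((2 * (k + l) : ℕ) + 1 : ℝ) = 2 * ((k + l : ℕ) : ℝ) + 1 := by push_cast; ring
  rw [hcast]
  field_simp
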